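/- If w* ∈ ℝ^n is a minimizer of the function Φ(w) = Σ_{j=1}^n ( −ν_j w_j − ∫_{Vor_w(j)} (‖x − y_j‖ − w_j) dμ(x) ), then w* is adapted to (μ, ν), i.e. μ(Vor_{w*}(j)) = ν_j for every j ∈ {1, …, n}. -/

import Mathlib

open MeasureTheory ENNReal

noncomputable section

/-- The additively weighted Voronoi cell of the site `y j` with weights `w`. -/
def Vor {d n : ℕ} (y : Fin n → EuclideanSpace ℝ (Fin d)) (w : Fin n → ℝ) (j : Fin n) :
    Set (EuclideanSpace ℝ (Fin d)) :=
  {x | ∀ k, k ≠ j → ‖x - y j‖ - w j ≤ ‖x - y k‖ - w k}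

set_option linter.unusedSectionVars false

open Polynomial in
lemma fiber_finite {A0 B0 c r2 : ℝ} (hc : c^2 ≠ (A0 - B0)^2) (hr2 : 0 ≤ r2) :
    {t : ℝ | Real.sqrt ((t - A0)^2 + r2) - Real.sqrt ((t - B0)^2 + r2) = c}.Finite := by
  set K := A0^2 - B0^2 with hK
  set D := A0 - B0 with hD
  set p : Polynomial ℝ := C (4*(D^2 - c^2)) * X^2 + C ((-4)*D*(K - c^2) + 8*c^2*B0) * X
      + C ((K - c^2)^2 - 4*c^2*(B0^2 + r2)) with hp
  have hcoeff : p.coeff 2 = 4*(D^2 - c^2) := by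
    rw [hp]
    simp only [coeff_add, coeff_C_mul, coeff_X_pow, coeff_C, coeff_X]
    norm_num
  have hp0 : p ≠ 0 := by
    intro h
    rw [h] at hcoeff
    simp at hcoeff
    exact hc (by linarith)
  apply Set.Finite.subset (Polynomial.finite_setOf_isRoot hp0)
  intro t ht
  simp only [Set.mem_setOf_eq] at ht ⊢
  set sY := Real.sqrt ((t - B0)^2 + r2) with hsY
  have hY : sY^2 = (t - B0)^2 + r2 := Real.sq_sqrt (by positivity)
  have hX : (Real.sqrt ((t - A0)^2 + r2))^2 = (t - A0)^2 + r2 := Real.sq_sqrt (by positivity)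
  have hs1 : Real.sqrt ((t - A0)^2 + r2) = sY + c := by linarith
  rw [hs1] at hX
  have h2 : (t - A0)^2 - (t - B0)^2 - c^2 = 2*c*sY := by linear_combination hY - hX
  have h3 : ((t - A0)^2 - (t - B0)^2 - c^2)^2 = 4*c^2*((t - B0)^2 + r2) := by
    rw [h2]; rw [← hY]; ring
  show p.IsRoot t
  simp only [hp, IsRoot, eval_add, eval_mul, eval_pow, eval_C, eval_X]
  linear_combination h3

lemma null_of_finite_fibers {m : ℕ} (S : Set (Fin (m+1) → ℝ)) (hS : MeasurableSet S)
    (h : ∀ z : Fin m → ℝ, {t : ℝ | Fin.cons t z ∈ S}.Finite) : volume S = 0 := by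
  have h1 := measurePreserving_piFinSuccAbove (fun _ : Fin (m+1) => (volume : Measure ℝ)) 0
  have hA : MeasurableSet ((MeasurableEquiv.piFinSuccAbove (fun _ : Fin (m+1) => ℝ) 0).symm ⁻¹' S) :=
    (MeasurableEquiv.piFinSuccAbove (fun _ : Fin (m+1) => ℝ) 0).symm.measurable hS
  have key : volume S = ((volume : Measure ℝ).prod (volume : Measure (Fin m → ℝ)))
      ((MeasurableEquiv.piFinSuccAbove (fun _ : Fin (m+1) => ℝ) 0).symm ⁻¹' S) := by
    rw [show (volume : Measure (Fin m → ℝ)) = Measure.pi fun _ => volume from volume_pi,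
      volume_pi, ← h1.measure_preimage hA.nullMeasurableSet]
    congr 1
    ext x
    simp
  have hswap : MeasurePreserving (Prod.swap : (Fin m → ℝ) × ℝ → ℝ × (Fin m → ℝ))
      ((volume : Measure (Fin m → ℝ)).prod (volume : Measure ℝ))
      ((volume : Measure ℝ).prod (volume : Measure (Fin m → ℝ))) := Measure.measurePreserving_swap
  rw [key, ← hswap.measure_preimage hA.nullMeasurableSet]
  have hB : MeasurableSet (Prod.swap ⁻¹'
      ((MeasurableEquiv.piFinSuccAbove (fun _ : Fin (m+1) => ℝ) 0).symm ⁻¹' S)) :=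
    measurable_swap hA
  rw [Measure.measure_prod_null hB]
  refine Filter.Eventually.of_forall fun z => ?_
  have : Prod.mk z ⁻¹' (Prod.swap ⁻¹'
      ((MeasurableEquiv.piFinSuccAbove (fun _ : Fin (m+1) => ℝ) 0).symm ⁻¹' S))
      = {t : ℝ | Fin.cons t z ∈ S} := by
    ext t
    simp [MeasurableEquiv.piFinSuccAbove_symm_apply, Fin.insertNth_zero, Fin.consEquiv]
  simp only [Pi.zero_apply]
  show volume (Prod.mk z ⁻¹' (Prod.swap ⁻¹'
      ((MeasurableEquiv.piFinSuccAbove (fun _ : Fin (m+1) => ℝ) 0).symm ⁻¹' S))) = 0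
  rw [this]
  exact (h z).measure_zero _

variable {d : ℕ}

lemma subset_line (a b : EuclideanSpace ℝ (Fin d)) (hab : a ≠ b) :
    {x : EuclideanSpace ℝ (Fin d) | ‖x - a‖ - ‖x - b‖ = ‖a - b‖} ⊆
      (affineSpan ℝ ({a, b} : Set (EuclideanSpace ℝ (Fin d))) : Set (EuclideanSpace ℝ (Fin d))) := by
  intro x hx
  simp only [Set.mem_setOf_eq] at hx
  have hb : b ∈ affineSpan ℝ ({a, b} : Set (EuclideanSpace ℝ (Fin d))) :=
    mem_affineSpan ℝ (by simp)
  have hdir : b - a ∈ (affineSpan ℝ ({a, b} : Set (EuclideanSpace ℝ (Fin d)))).direction := by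
    rw [direction_affineSpan]
    exact vsub_mem_vectorSpan ℝ (Set.mem_insert_of_mem a rfl) (Set.mem_insert a {b})
  have hnorm : ‖(x - b) + (b - a)‖ = ‖x - b‖ + ‖b - a‖ := by
    have h1 : (x - b) + (b - a) = x - a := by abel
    rw [h1, norm_sub_rev b a]
    linarith
  have hray : SameRay ℝ (x - b) (b - a) := sameRay_iff_norm_add.mpr hnorm
  rcases hray with h | h | ⟨r₁, r₂, hr₁, hr₂, hr⟩
  · have : x = b := by rwa [sub_eq_zero] at h
    rw [this]; exact hb
  · exact absurd (by rwa [sub_eq_zero, eq_comm] at h) hab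
  · have hx2 : x = (r₁⁻¹ * r₂) • (b - a) +ᵥ b := by
      have : x - b = (r₁⁻¹ * r₂) • (b - a) := by
        rw [mul_smul, ← hr, inv_smul_smul₀ (ne_of_gt hr₁)]
      simp [← this]
    rw [hx2]
    exact AffineSubspace.vadd_mem_of_mem_direction
      (Submodule.smul_mem _ _ hdir) hb

lemma line_null (hd : 2 ≤ d) (a b : EuclideanSpace ℝ (Fin d)) (hab : a ≠ b) :
    volume ((affineSpan ℝ ({a, b} : Set (EuclideanSpace ℝ (Fin d)))) :
      Set (EuclideanSpace ℝ (Fin d))) = 0 := by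
  apply Measure.addHaar_affineSubspace
  intro htop
  have h1 : (vectorSpan ℝ ({a, b} : Set (EuclideanSpace ℝ (Fin d)))) = ⊤ := by
    rw [← direction_affineSpan, htop, AffineSubspace.direction_top]
  rw [vectorSpan_pair] at h1
  have h2 : Module.finrank ℝ (ℝ ∙ (a -ᵥ b)) = 1 :=
    finrank_span_singleton (by simpa [vsub_eq_sub, sub_ne_zero] using hab)
  rw [h1] at h2
  have h3 : Module.finrank ℝ (⊤ : Submodule ℝ (EuclideanSpace ℝ (Fin d))) = d := by
    rw [finrank_top]
    simp
  omega

lemma hyperboloid_null {d : ℕ} (hd : 2 ≤ d) (a b : EuclideanSpace ℝ (Fin d)) (hab : a ≠ b)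
    (c : ℝ) : volume {x : EuclideanSpace ℝ (Fin d) | ‖x - a‖ - ‖x - b‖ = c} = 0 := by
  by_cases hc : c^2 = ‖a - b‖^2
  · have habs : c = ‖a - b‖ ∨ c = -‖a - b‖ := sq_eq_sq_iff_eq_or_eq_neg.mp hc
    rcases habs with rfl | rfl
    · exact measure_mono_null (subset_line a b hab) (line_null hd a b hab)
    · have hset : {x : EuclideanSpace ℝ (Fin d) | ‖x - a‖ - ‖x - b‖ = -‖a - b‖} =
          {x : EuclideanSpace ℝ (Fin d) | ‖x - b‖ - ‖x - a‖ = ‖b - a‖} := by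
        ext x
        simp only [Set.mem_setOf_eq, norm_sub_rev a b]
        constructor <;> intro h <;> linarith
      rw [hset]
      refine measure_mono_null (subset_line b a hab.symm) ?_
      rw [Set.pair_comm]
      exact line_null hd a b hab
  · -- rotate so that a - b points along the first coordinate
    obtain ⟨m, rfl⟩ : ∃ m, d = m + 1 := ⟨d - 1, by omega⟩
    set L : ℝ := ‖a - b‖ with hLdef
    have hL0 : 0 < L := by
      rw [hLdef]; exact norm_sub_pos_iff.mpr hab
    set e0 : EuclideanSpace ℝ (Fin (m+1)) := L⁻¹ • (a - b) with he0def
    have he0 : ‖e0‖ = 1 := by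
      rw [he0def, norm_smul, norm_inv, Real.norm_eq_abs, abs_of_pos hL0, ← hLdef,
        inv_mul_cancel₀ (ne_of_gt hL0)]
    have hcard : Module.finrank ℝ (EuclideanSpace ℝ (Fin (m+1))) = Fintype.card (Fin (m+1)) := by
      simp
    have horth : Orthonormal ℝ (Set.restrict {(0 : Fin (m+1))} (fun _ => e0)) := by
      constructor
      · intro i; exact he0
      · intro i j hij
        exact absurd (Subtype.ext (by
          have hi := i.2; have hj := j.2
          simp only [Set.mem_singleton_iff] at hi hj
          rw [hi, hj])) hij
    obtain ⟨bb, hbb⟩ := horth.exists_orthonormalBasis_extension_of_card_eq hcard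
    have hbb0 : bb 0 = e0 := hbb 0 rfl
    set A : EuclideanSpace ℝ (Fin (m+1)) := bb.repr a with hA
    set B : EuclideanSpace ℝ (Fin (m+1)) := bb.repr b with hB
    have hab' : a - b = L • e0 := by
      rw [he0def, smul_smul, mul_inv_cancel₀ (ne_of_gt hL0), one_smul]
    have hAB : A - B = L • EuclideanSpace.single 0 1 := by
      rw [hA, hB, ← map_sub, hab', _root_.map_smul, ← hbb0, bb.repr_self]
    have hdiff : ∀ i, A i - B i = L * (EuclideanSpace.single (0 : Fin (m+1)) (1:ℝ)) i := by
      intro i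
      rw [← PiLp.sub_apply, hAB]
      simp
    have hAB0 : A 0 - B 0 = L := by
      have := hdiff 0
      rwa [EuclideanSpace.single_apply, if_pos rfl, mul_one] at this
    have hABs : ∀ i : Fin m, A i.succ = B i.succ := by
      intro i
      have := hdiff i.succ
      rw [EuclideanSpace.single_apply, if_neg (Fin.succ_ne_zero i), mul_zero] at this
      linarith
    have hE1meas : MeasurableSet {u : EuclideanSpace ℝ (Fin (m+1)) | ‖u - A‖ - ‖u - B‖ = c} := by
      have hcont1 : Continuous fun u : EuclideanSpace ℝ (Fin (m+1)) => ‖u - A‖ - ‖u - B‖ := by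
        fun_prop
      exact (isClosed_eq hcont1 continuous_const).measurableSet
    have him : {x : EuclideanSpace ℝ (Fin (m+1)) | ‖x - a‖ - ‖x - b‖ = c} =
        ⇑bb.repr ⁻¹' {u : EuclideanSpace ℝ (Fin (m+1)) | ‖u - A‖ - ‖u - B‖ = c} := by
      ext x
      simp only [Set.mem_preimage, Set.mem_setOf_eq, hA, hB, ← map_sub,
        LinearIsometryEquiv.norm_map]
    rw [him, bb.measurePreserving_repr.measure_preimage hE1meas.nullMeasurableSet]
    have hpre := (EuclideanSpace.volume_preserving_symm_measurableEquiv_toLp (Fin (m+1))).symm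
    rw [← hpre.measure_preimage hE1meas.nullMeasurableSet]
    apply null_of_finite_fibers _ ((MeasurableEquiv.toLp 2 (Fin (m+1) → ℝ)).symm.symm.measurable hE1meas)
    intro z
    have hfib : {t : ℝ | Fin.cons t z ∈ ⇑(MeasurableEquiv.toLp 2 (Fin (m+1) → ℝ)).symm.symm ⁻¹'
          {u : EuclideanSpace ℝ (Fin (m+1)) | ‖u - A‖ - ‖u - B‖ = c}} =
        {t : ℝ | Real.sqrt ((t - A 0)^2 + ∑ i : Fin m, (z i - B i.succ)^2)
          - Real.sqrt ((t - B 0)^2 + ∑ i : Fin m, (z i - B i.succ)^2) = c} := by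
      ext t
      simp only [Set.mem_preimage, Set.mem_setOf_eq]
      have hnorm : ∀ v : EuclideanSpace ℝ (Fin (m+1)),
          ‖(MeasurableEquiv.toLp 2 (Fin (m+1) → ℝ)).symm.symm (Fin.cons t z) - v‖
            = Real.sqrt ((t - v 0)^2 + ∑ i : Fin m, (z i - v i.succ)^2) := by
        intro v
        rw [EuclideanSpace.norm_eq]
        congr 1
        rw [Fin.sum_univ_succ]
        congr 1
        · simp [MeasurableEquiv.symm_symm, MeasurableEquiv.coe_toLp, sq_abs]
        · refine Finset.sum_congr rfl fun i _ => ?_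
          simp [MeasurableEquiv.symm_symm, MeasurableEquiv.coe_toLp, sq_abs]
      rw [hnorm A, hnorm B]
      have : ∀ i : Fin m, (z i - A i.succ)^2 = (z i - B i.succ)^2 := fun i => by rw [hABs i]
      simp_rw [← this]
    rw [hfib]
    apply fiber_finite
    · rw [hAB0]
      exact hc
    · positivity

variable {d n : ℕ} [NeZero n]

def fmin (y : Fin n → EuclideanSpace ℝ (Fin d)) (w : Fin n → ℝ)
    (x : EuclideanSpace ℝ (Fin d)) : ℝ :=
  Finset.univ.inf' Finset.univ_nonempty fun k => ‖x - y k‖ - w k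

variable {y : Fin n → EuclideanSpace ℝ (Fin d)} {w : Fin n → ℝ}
  {x : EuclideanSpace ℝ (Fin d)} {j : Fin n}

lemma fmin_le (k : Fin n) : fmin y w x ≤ ‖x - y k‖ - w k :=
  Finset.inf'_le _ (Finset.mem_univ k)

lemma exists_fmin (y : Fin n → EuclideanSpace ℝ (Fin d)) (w : Fin n → ℝ)
    (x : EuclideanSpace ℝ (Fin d)) :
    ∃ k, x ∈ Vor y w k ∧ fmin y w x = ‖x - y k‖ - w k := by
  obtain ⟨k, -, hk⟩ := Finset.exists_mem_eq_inf' (Finset.univ_nonempty (α := Fin n))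
    fun k => ‖x - y k‖ - w k
  exact ⟨k, fun l _ => hk ▸ fmin_le l, hk⟩

lemma fmin_eq_of_mem (hx : x ∈ Vor y w j) : fmin y w x = ‖x - y j‖ - w j := by
  refine le_antisymm (fmin_le j) ?_
  obtain ⟨k, -, hk⟩ := exists_fmin y w x
  rcases eq_or_ne k j with rfl | hkj
  · exact hk.ge
  · exact hk ▸ hx k hkj

lemma continuous_fmin : Continuous (fmin y w) := by
  have : fmin y w = ⇑(Finset.univ.inf' (Finset.univ_nonempty (α := Fin n))
      fun k => ContinuousMap.mk (fun x : EuclideanSpace ℝ (Fin d) => ‖x - y k‖ - w k)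
        (by fun_prop)) := by
    funext x
    rw [ContinuousMap.inf'_apply]
    rfl
  rw [this]
  exact ContinuousMap.continuous _

lemma measurableSet_vor : MeasurableSet (Vor y w j) := by
  have : Vor y w j = ⋂ k, ⋂ (_ : k ≠ j),
      {x : EuclideanSpace ℝ (Fin d) | ‖x - y j‖ - w j ≤ ‖x - y k‖ - w k} := by
    ext x; simp [Vor]
  rw [this]
  exact MeasurableSet.iInter fun k => MeasurableSet.iInter fun _ =>
    (isClosed_le (by fun_prop) (by fun_prop)).measurableSet

variable {μ : Measure (EuclideanSpace ℝ (Fin d))} [IsProbabilityMeasure μ]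

lemma integrable_norm_sub (hμint : Integrable (fun x => ‖x‖) μ) (v : EuclideanSpace ℝ (Fin d))
    (c : ℝ) : Integrable (fun x => ‖x - v‖ - c) μ := by
  refine Integrable.sub ?_ (integrable_const c)
  refine Integrable.mono' (hμint.add (integrable_const ‖v‖))
    ((continuous_id.sub continuous_const).norm.aestronglyMeasurable) ?_
  refine Filter.Eventually.of_forall fun x => ?_
  simp only [Pi.add_apply]
  rw [Real.norm_eq_abs, abs_of_nonneg (norm_nonneg _)]
  exact norm_sub_le x v

lemma integrable_fmin (hμint : Integrable (fun x => ‖x‖) μ) :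
    Integrable (fmin y w) μ := by
  set Cb : ℝ := ∑ k, (‖y k‖ + |w k|) with hC
  have hCk : ∀ k, ‖y k‖ + |w k| ≤ Cb := fun k =>
    Finset.single_le_sum (f := fun k => ‖y k‖ + |w k|)
      (fun k _ => by positivity) (Finset.mem_univ k)
  refine Integrable.mono' (hμint.add (integrable_const Cb)) continuous_fmin.aestronglyMeasurable ?_
  refine Filter.Eventually.of_forall fun x => ?_
  simp only [Pi.add_apply]
  rw [Real.norm_eq_abs, abs_le]
  constructor
  · obtain ⟨k, -, hk⟩ := exists_fmin y w x
    rw [hk]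
    have h1 : -|w k| ≤ ‖x - y k‖ - w k := by
      have := le_abs_self (w k); have := norm_nonneg (x - y k); linarith
    have h2 : -(‖x‖ + Cb) ≤ -|w k| := by
      have := hCk k; have := norm_nonneg (y k); have := norm_nonneg x; linarith
    linarith
  · obtain ⟨k⟩ : Nonempty (Fin n) := inferInstance
    refine (fmin_le k).trans ?_
    have := hCk k
    have h3 : ‖x - y k‖ ≤ ‖x‖ + ‖y k‖ := norm_sub_le x (y k)
    have := abs_nonneg (w k)
    have := neg_abs_le (w k)
    linarith


lemma vor_inter_null (hd : 2 ≤ d) (hac : μ ≪ volume) (hy : Function.Injective y)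
    {k : Fin n} (hjk : j ≠ k) : μ (Vor y w j ∩ Vor y w k) = 0 := by
  refine measure_mono_null (fun x hx => ?_)
    (hac (hyperboloid_null hd (y j) (y k) (fun h => hjk (hy h)) (w j - w k)))
  obtain ⟨h1, h2⟩ := hx
  have ha := h1 k (Ne.symm hjk)
  have hb := h2 j hjk
  simp only [Set.mem_setOf_eq]
  linarith

lemma bdry_null (hd : 2 ≤ d) (hac : μ ≪ volume) (hy : Function.Injective y) :
    μ (⋃ (p : Fin n × Fin n), ⋃ (_ : p.1 ≠ p.2), Vor y w p.1 ∩ Vor y w p.2) = 0 := by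
  refine measure_iUnion_null fun p => ?_
  by_cases hp : p.1 = p.2
  · simp [hp]
  · simpa [hp] using vor_inter_null hd hac hy hp

lemma sum_setIntegral_eq (hd : 2 ≤ d) (hac : μ ≪ volume) (hy : Function.Injective y)
    (hμint : Integrable (fun x => ‖x‖) μ) :
    ∑ j, ∫ x in Vor y w j, (‖x - y j‖ - w j) ∂μ = ∫ x, fmin y w x ∂μ := by
  have hstep1 : ∀ j : Fin n, ∫ x in Vor y w j, (‖x - y j‖ - w j) ∂μ
      = ∫ x in Vor y w j, fmin y w x ∂μ := fun j =>
    setIntegral_congr_fun measurableSet_vor fun x hx => (fmin_eq_of_mem hx).symm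
  simp_rw [hstep1]
  have hstep2 : ∀ j : Fin n, ∫ x in Vor y w j, fmin y w x ∂μ
      = ∫ x, (Vor y w j).indicator (fmin y w) x ∂μ := fun j =>
    (integral_indicator measurableSet_vor).symm
  simp_rw [hstep2]
  rw [← integral_finset_sum _ fun j _ =>
    (integrable_fmin hμint).indicator measurableSet_vor]
  refine integral_congr_ae ?_
  have hN := bdry_null (μ := μ) (y := y) (w := w) hd hac hy
  rw [← compl_mem_ae_iff] at hN
  filter_upwards [hN] with x hx
  obtain ⟨j, hj, -⟩ := exists_fmin y w x
  rw [Finset.sum_eq_single_of_mem j (Finset.mem_univ j)]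
  · exact Set.indicator_of_mem hj _
  · intro k _ hkj
    refine Set.indicator_of_notMem (fun hk => ?_) _
    exact hx (Set.mem_iUnion.mpr ⟨(k, j), Set.mem_iUnion.mpr ⟨hkj, hk, hj⟩⟩)

lemma fmin_mono {w' : Fin n → ℝ} (h : ∀ k, w k ≤ w' k) (x : EuclideanSpace ℝ (Fin d)) :
    fmin y w' x ≤ fmin y w x := by
  obtain ⟨k, -, hk⟩ := exists_fmin y w x
  rw [hk]
  refine (fmin_le k).trans ?_
  have := h k; linarith

lemma fmin_le_add {w' : Fin n → ℝ} {t : ℝ} (h : ∀ k, w' k ≤ w k + t)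
    (x : EuclideanSpace ℝ (Fin d)) : fmin y w x ≤ fmin y w' x + t := by
  obtain ⟨k, -, hk⟩ := exists_fmin y w' x
  rw [hk]
  refine le_trans (fmin_le k) ?_
  have := h k; linarith

-- off-cell equality for upward perturbation
lemma fmin_update_eq_of_not_mem {t : ℝ} (ht : 0 ≤ t)
    (hx : x ∉ Vor y (Function.update w j (w j + t)) j) :
    fmin y (Function.update w j (w j + t)) x = fmin y w x := by
  set w' := Function.update w j (w j + t) with hw'
  refine le_antisymm (fmin_mono (fun k => ?_) x) ?_
  · rcases eq_or_ne k j with rfl | hkj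
    · simp [hw', Function.update_self]; linarith
    · simp [hw', Function.update_of_ne hkj]
  · obtain ⟨l, hl, hleq⟩ := exists_fmin y w' x
    rcases eq_or_ne l j with rfl | hlj
    · exact absurd hl hx
    · rw [hleq]
      have : w' l = w l := Function.update_of_ne hlj _ _
      rw [this]
      exact fmin_le l

lemma mem_vor_update_add {t : ℝ} (ht : 0 ≤ t) (hx : x ∈ Vor y w j) :
    x ∈ Vor y (Function.update w j (w j + t)) j := by
  intro k hkj
  have := hx k hkj
  rw [Function.update_self, Function.update_of_ne hkj]
  linarith

lemma mem_vor_of_update_sub {t : ℝ} (ht : 0 ≤ t)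
    (hx : x ∈ Vor y (Function.update w j (w j - t)) j) : x ∈ Vor y w j := by
  intro k hkj
  have := hx k hkj
  rw [Function.update_self] at this
  rw [Function.update_of_ne hkj] at this
  linarith

lemma sideA (hμint : Integrable (fun x => ‖x‖) μ) {t : ℝ} (ht : 0 < t) :
    ∫ x, (fmin y w x - fmin y (Function.update w j (w j + t)) x) ∂μ
      ≤ t * (μ (Vor y (Function.update w j (w j + t)) j)).toReal := by
  set w' := Function.update w j (w j + t) with hw'
  have hint : Integrable (fun x => fmin y w x - fmin y w' x) μ :=
    (integrable_fmin hμint).sub (integrable_fmin hμint)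
  have hub : ∀ x, fmin y w x - fmin y w' x ≤ t := by
    intro x
    have := fmin_le_add (w := w) (w' := w') (t := t) (y := y) (fun k => by
      rcases eq_or_ne k j with rfl | hkj
      · rw [hw', Function.update_self]
      · rw [hw', Function.update_of_ne hkj]; linarith) x
    linarith
  rw [← integral_add_compl (measurableSet_vor (y := y) (w := w') (j := j)) hint]
  have hzero : ∫ x in (Vor y w' j)ᶜ, (fmin y w x - fmin y w' x) ∂μ = 0 := by
    rw [setIntegral_congr_fun measurableSet_vor.compl
      (g := fun _ => (0:ℝ)) (fun x hx => by
        rw [sub_eq_zero, eq_comm]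
        exact fmin_update_eq_of_not_mem ht.le hx)]
    simp
  rw [hzero, add_zero]
  calc ∫ x in Vor y w' j, (fmin y w x - fmin y w' x) ∂μ
      ≤ ∫ _ in Vor y w' j, t ∂μ := by
        refine setIntegral_mono_on hint.integrableOn (integrableOn_const (measure_ne_top μ _))
          measurableSet_vor (fun x _ => hub x)
    _ = (μ (Vor y w' j)).toReal • t := setIntegral_const t
    _ = t * (μ (Vor y w' j)).toReal := by rw [smul_eq_mul, mul_comm]

lemma sideB (hμint : Integrable (fun x => ‖x‖) μ) {t : ℝ} (ht : 0 < t) :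
    t * (μ (Vor y (Function.update w j (w j - t)) j)).toReal
      ≤ ∫ x, (fmin y (Function.update w j (w j - t)) x - fmin y w x) ∂μ := by
  set w'' := Function.update w j (w j - t) with hw''
  have hint : Integrable (fun x => fmin y w'' x - fmin y w x) μ :=
    (integrable_fmin hμint).sub (integrable_fmin hμint)
  have hnn : ∀ x, 0 ≤ fmin y w'' x - fmin y w x := by
    intro x
    have := fmin_mono (w := w'') (w' := w) (y := y) (fun k => by
      rcases eq_or_ne k j with rfl | hkj
      · rw [hw'', Function.update_self]; linarith
      · rw [hw'', Function.update_of_ne hkj]) x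
    linarith
  rw [← integral_add_compl (measurableSet_vor (y := y) (w := w'') (j := j)) hint]
  have h2 : ∫ x in (Vor y w'' j)ᶜ, (fmin y w'' x - fmin y w x) ∂μ ≥ 0 :=
    setIntegral_nonneg measurableSet_vor.compl fun x _ => hnn x
  have h1 : ∫ x in Vor y w'' j, (fmin y w'' x - fmin y w x) ∂μ
      = t * (μ (Vor y w'' j)).toReal := by
    rw [setIntegral_congr_fun (measurableSet_vor (y := y) (w := w'') (j := j))
      (g := fun _ => t) (fun x hx => ?_)]
    · rw [setIntegral_const, smul_eq_mul, mul_comm]; rfl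
    · have hxw : x ∈ Vor y w j := mem_vor_of_update_sub ht.le hx
      rw [fmin_eq_of_mem hx, fmin_eq_of_mem hxw, hw'', Function.update_self]
      ring
  linarith

/-- If `w*` minimizes
`Φ(w) = ∑ⱼ ( -νⱼ wⱼ - ∫_{Vor_w(j)} (‖x - yⱼ‖ - wⱼ) dμ(x) )`, then `w*` is adapted
to `(μ, ν)`, i.e. `μ(Vor_{w*}(j)) = νⱼ` for every `j`. -/
theorem Phi_minimizer_is_adapted
    {d n : ℕ} (hd : 2 ≤ d)
    (μ : Measure (EuclideanSpace ℝ (Fin d))) [IsProbabilityMeasure μ]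
    (hac : μ ≪ volume)
    (hμint : Integrable (fun x => ‖x‖) μ)
    (y : Fin n → EuclideanSpace ℝ (Fin d)) (hy : Function.Injective y)
    (a : Fin n → ℝ) (ha : ∀ j, a j ∈ Set.Ioc (0 : ℝ) 1) (hsum : ∑ j, a j = 1)
    (wstar : Fin n → ℝ)
    (hmin : ∀ w : Fin n → ℝ,
      ∑ j, (-(a j * wstar j) - ∫ x in Vor y wstar j, (‖x - y j‖ - wstar j) ∂μ) ≤
        ∑ j, (-(a j * w j) - ∫ x in Vor y w j, (‖x - y j‖ - w j) ∂μ)) :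
    ∀ j, μ (Vor y wstar j) = ENNReal.ofReal (a j) := by
  have hn : n ≠ 0 := by rintro rfl; simp at hsum
  have _ : NeZero n := ⟨hn⟩
  intro j
  have hPhi : ∀ w : Fin n → ℝ,
      ∑ k, (-(a k * w k) - ∫ x in Vor y w k, (‖x - y k‖ - w k) ∂μ)
        = -(∑ k, a k * w k) - ∫ x, fmin y w x ∂μ := by
    intro w
    rw [Finset.sum_sub_distrib, ← sum_setIntegral_eq hd hac hy hμint (w := w),
      Finset.sum_neg_distrib]
  have hmin' : ∀ w : Fin n → ℝ, -(∑ k, a k * wstar k) - ∫ x, fmin y wstar x ∂μ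
      ≤ -(∑ k, a k * w k) - ∫ x, fmin y w x ∂μ := by
    intro w
    have := hmin w
    rwa [hPhi, hPhi] at this
  have hsumupd : ∀ b : ℝ, ∑ k, a k * (Function.update wstar j b k)
      = (∑ k, a k * wstar k) + a j * (b - wstar j) := by
    intro b
    have h1 : ∀ k : Fin n, a k * (Function.update wstar j b k)
        = a k * wstar k + (if k = j then a j * (b - wstar j) else 0) := by
      intro k
      rcases eq_or_ne k j with rfl | hkj
      · rw [Function.update_self, if_pos rfl]; ring
      · rw [Function.update_of_ne hkj, if_neg hkj]; ring
    simp_rw [h1]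
    rw [Finset.sum_add_distrib, Finset.sum_ite_eq' Finset.univ j
      (fun _ => a j * (b - wstar j))]
    simp
  have hIsub : ∀ w w' : Fin n → ℝ,
      (∫ x, fmin y w x ∂μ) - ∫ x, fmin y w' x ∂μ = ∫ x, (fmin y w x - fmin y w' x) ∂μ :=
    fun w w' => (integral_sub (integrable_fmin hμint) (integrable_fmin hμint)).symm
  have hA : ∀ t : ℝ, 0 < t →
      ENNReal.ofReal (a j) ≤ μ (Vor y (Function.update wstar j (wstar j + t)) j) := by
    intro t ht
    have h1 := hmin' (Function.update wstar j (wstar j + t))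
    rw [hsumupd (wstar j + t)] at h1
    have h2 : a j * t ≤ ∫ x, (fmin y wstar x
        - fmin y (Function.update wstar j (wstar j + t)) x) ∂μ := by
      rw [← hIsub]
      have : a j * (wstar j + t - wstar j) = a j * t := by ring
      linarith [h1, this]
    have h3 := sideA (μ := μ) (y := y) (w := wstar) (j := j) hμint ht
    have h5 : a j ≤ (μ (Vor y (Function.update wstar j (wstar j + t)) j)).toReal := by
      have h4 : a j * t ≤ (μ (Vor y (Function.update wstar j (wstar j + t)) j)).toReal * t := by
        rw [mul_comm _ t]; linarith
      exact le_of_mul_le_mul_right h4 ht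
    exact ENNReal.ofReal_le_of_le_toReal h5
  have hB : ∀ t : ℝ, 0 < t →
      μ (Vor y (Function.update wstar j (wstar j - t)) j) ≤ ENNReal.ofReal (a j) := by
    intro t ht
    have h1 := hmin' (Function.update wstar j (wstar j - t))
    rw [hsumupd (wstar j - t)] at h1
    have h2 : (∫ x, (fmin y (Function.update wstar j (wstar j - t)) x
        - fmin y wstar x) ∂μ) ≤ a j * t := by
      rw [← hIsub]
      have : a j * (wstar j - t - wstar j) = -(a j * t) := by ring
      linarith [h1, this]
    have h3 := sideB (μ := μ) (y := y) (w := wstar) (j := j) hμint ht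
    have h5 : (μ (Vor y (Function.update wstar j (wstar j - t)) j)).toReal ≤ a j := by
      have h4 : t * (μ (Vor y (Function.update wstar j (wstar j - t)) j)).toReal
          ≤ t * a j := by rw [mul_comm t (a j)]; linarith
      exact le_of_mul_le_mul_left h4 ht
    exact (ENNReal.le_ofReal_iff_toReal_le (measure_ne_top μ _) (ha j).1.le).mpr h5
  have hlower : ENNReal.ofReal (a j) ≤ μ (Vor y wstar j) := by
    have hanti : Antitone (fun i : ℕ =>
        Vor y (Function.update wstar j (wstar j + 1/((i:ℝ)+1))) j) := by
      intro i i' hii' x hx k hkj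
      have h0 := hx k hkj
      rw [Function.update_self, Function.update_of_ne hkj] at h0 ⊢
      have hle : 1/((i':ℝ)+1) ≤ 1/((i:ℝ)+1) := by
        apply one_div_le_one_div_of_le (by positivity)
        have : (i:ℝ) ≤ (i':ℝ) := Nat.cast_le.mpr hii'
        linarith
      linarith
    have hiInter : (⋂ i : ℕ, Vor y (Function.update wstar j (wstar j + 1/((i:ℝ)+1))) j)
        = Vor y wstar j := by
      ext x
      constructor
      · intro hx k hkj
        refine le_of_forall_pos_le_add fun ε hε => ?_
        obtain ⟨i, hi⟩ := exists_nat_one_div_lt hε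
        have h0 := Set.mem_iInter.mp hx i k hkj
        rw [Function.update_self, Function.update_of_ne hkj] at h0
        linarith
      · intro hx
        refine Set.mem_iInter.mpr fun i k hkj => ?_
        have h0 := hx k hkj
        rw [Function.update_self, Function.update_of_ne hkj]
        have : (0:ℝ) < 1/((i:ℝ)+1) := by positivity
        linarith
    have htend := tendsto_measure_iInter_atTop (μ := μ)
      (fun i => measurableSet_vor.nullMeasurableSet) hanti ⟨0, measure_ne_top μ _⟩
    rw [hiInter] at htend
    exact ge_of_tendsto htend (Filter.Eventually.of_forall fun i =>
      hA (1/((i:ℝ)+1)) (by positivity))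
  have hupper : μ (Vor y wstar j) ≤ ENNReal.ofReal (a j) := by
    set U := {x : EuclideanSpace ℝ (Fin d) |
      ∀ k, k ≠ j → ‖x - y j‖ - wstar j < ‖x - y k‖ - wstar k} with hU
    have hμU : μ (Vor y wstar j) ≤ μ U := by
      have hsub : Vor y wstar j ⊆ U ∪ ⋃ (p : Fin n × Fin n), ⋃ (_ : p.1 ≠ p.2),
          Vor y wstar p.1 ∩ Vor y wstar p.2 := by
        intro x hx
        by_cases hxU : x ∈ U
        · exact Or.inl hxU
        · right
          rw [hU, Set.mem_setOf_eq] at hxU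
          push_neg at hxU
          obtain ⟨k, hkj, hle⟩ := hxU
          have heq : ‖x - y j‖ - wstar j = ‖x - y k‖ - wstar k :=
            le_antisymm (hx k hkj) hle
          have hxk : x ∈ Vor y wstar k := by
            intro l hlk
            rcases eq_or_ne l j with rfl | hlj
            · linarith
            · have := hx l hlj
              linarith
          exact Set.mem_iUnion.mpr ⟨(j, k), Set.mem_iUnion.mpr ⟨hkj.symm, hx, hxk⟩⟩
      calc μ (Vor y wstar j) ≤ μ (U ∪ ⋃ (p : Fin n × Fin n), ⋃ (_ : p.1 ≠ p.2),
          Vor y wstar p.1 ∩ Vor y wstar p.2) := measure_mono hsub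
        _ ≤ μ U + μ (⋃ (p : Fin n × Fin n), ⋃ (_ : p.1 ≠ p.2),
          Vor y wstar p.1 ∩ Vor y wstar p.2) := measure_union_le _ _
        _ = μ U := by rw [bdry_null hd hac hy, add_zero]
    have hmono : Monotone (fun i : ℕ =>
        Vor y (Function.update wstar j (wstar j - 1/((i:ℝ)+1))) j) := by
      intro i i' hii' x hx k hkj
      have h0 := hx k hkj
      rw [Function.update_self, Function.update_of_ne hkj] at h0 ⊢
      have hle : 1/((i':ℝ)+1) ≤ 1/((i:ℝ)+1) := by
        apply one_div_le_one_div_of_le (by positivity)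
        have : (i:ℝ) ≤ (i':ℝ) := Nat.cast_le.mpr hii'
        linarith
      linarith
    have hiUnion : (⋃ i : ℕ, Vor y (Function.update wstar j (wstar j - 1/((i:ℝ)+1))) j)
        = U := by
      ext x
      constructor
      · intro hx
        obtain ⟨i, hi⟩ := Set.mem_iUnion.mp hx
        intro k hkj
        have h0 := hi k hkj
        rw [Function.update_self, Function.update_of_ne hkj] at h0
        have : (0:ℝ) < 1/((i:ℝ)+1) := by positivity
        linarith
      · intro hx
        rcases Finset.eq_empty_or_nonempty (Finset.univ.erase j) with he | hne
        · refine Set.mem_iUnion.mpr ⟨0, fun k hkj => ?_⟩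
          exact absurd (Finset.mem_erase.mpr ⟨hkj, Finset.mem_univ k⟩) (by rw [he]; simp)
        · set ε := (Finset.univ.erase j).inf' hne
            (fun k => (‖x - y k‖ - wstar k) - (‖x - y j‖ - wstar j)) with hε
          have hεpos : 0 < ε := by
            rw [hε, Finset.lt_inf'_iff]
            intro k hk
            have := hx k (Finset.mem_erase.mp hk).1
            linarith
          obtain ⟨i, hi⟩ := exists_nat_one_div_lt hεpos
          refine Set.mem_iUnion.mpr ⟨i, fun k hkj => ?_⟩
          rw [Function.update_self, Function.update_of_ne hkj]
          have hεle : ε ≤ (‖x - y k‖ - wstar k) - (‖x - y j‖ - wstar j) := by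
            rw [hε]
            exact Finset.inf'_le _ (Finset.mem_erase.mpr ⟨hkj, Finset.mem_univ k⟩)
          linarith
    have htend := tendsto_measure_iUnion_atTop (μ := μ) hmono
    rw [hiUnion] at htend
    refine hμU.trans (le_of_tendsto htend (Filter.Eventually.of_forall fun i =>
      hB (1/((i:ℝ)+1)) (by positivity)))
  exact le_antisymm hupper hlower

end
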